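/- For every positive integer n, (2n+1) divides C(3n, n+1), and C(3n,n+1)/(2n+1) = C(3n+1,n)/(n+1) − C(3n,n)/(2n+1). -/
import Mathlib

theorem even_tails_symmetric_fish_count (n : ℕ) (hn : 0 < n) :
    (2 * n + 1) ∣ Nat.choose (3 * n) (n + 1) ∧
    Nat.choose (3 * n) (n + 1) / (2 * n + 1) =
      Nat.choose (3 * n + 1) n / (n + 1) - Nat.choose (3 * n) n / (2 * n + 1) := by
  -- key identity: C(3n+1,n+1)*(n+1) = C(3n+1,n)*(2n+1)
  have key : Nat.choose (3 * n + 1) (n + 1) * (n + 1) =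
      Nat.choose (3 * n + 1) n * (2 * n + 1) := by
    have h := Nat.choose_succ_right_eq (3 * n + 1) n
    rwa [show 3 * n + 1 - n = 2 * n + 1 by omega] at h
  have copn : Nat.Coprime n (n + 1) := by
    rw [show n + 1 = n + 1 from rfl]
    exact (Nat.coprime_self_add_right).mpr (Nat.coprime_one_right n)
  have cop1 : Nat.Coprime (2 * n + 1) (n + 1) := by
    rw [show 2 * n + 1 = n + (n + 1) by ring]
    exact Nat.coprime_add_self_left.mpr copn
  have copN : Nat.Coprime (2 * n + 1) n := by
    rw [show 2 * n + 1 = 1 + 2 * n by ring]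
    exact (Nat.coprime_add_mul_right_left 1 n 2).mpr (Nat.coprime_one_left n)
  have cop3 : Nat.Coprime (2 * n + 1) (3 * n + 1) := by
    rw [show 3 * n + 1 = (2 * n + 1) + n by ring]
    exact Nat.coprime_self_add_right.mpr copN
  -- (2n+1) ∣ C(3n+1, n+1)
  have hd1 : (2 * n + 1) ∣ Nat.choose (3 * n + 1) (n + 1) :=
    cop1.dvd_of_dvd_mul_right (key ▸ Dvd.intro_left _ rfl)
  -- (3n+1) * C(3n,n) = C(3n+1,n+1) * (n+1)
  have key2 : (3 * n + 1) * Nat.choose (3 * n) n =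
      Nat.choose (3 * n + 1) (n + 1) * (n + 1) := by
    simpa using Nat.add_one_mul_choose_eq (3 * n) n
  have hd2 : (2 * n + 1) ∣ Nat.choose (3 * n) n := by
    have h : (2 * n + 1) ∣ (3 * n + 1) * Nat.choose (3 * n) n := by
      rw [key2]; exact hd1.mul_right _
    exact cop3.dvd_of_dvd_mul_left h
  have pascal : Nat.choose (3 * n + 1) (n + 1) =
      Nat.choose (3 * n) n + Nat.choose (3 * n) (n + 1) := Nat.choose_succ_succ (3 * n) n
  have hd3 : (2 * n + 1) ∣ Nat.choose (3 * n) (n + 1) := by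
    have := Nat.dvd_sub hd1 hd2
    rwa [pascal, Nat.add_sub_cancel_left] at this
  have hd4 : (n + 1) ∣ Nat.choose (3 * n + 1) n := by
    apply cop1.symm.dvd_of_dvd_mul_right (m := Nat.choose (3 * n + 1) n)
    rw [← key]; exact Dvd.intro_left _ rfl
  refine ⟨hd3, ?_⟩
  obtain ⟨q, hq⟩ := hd2
  obtain ⟨r, hr⟩ := hd3
  obtain ⟨s, hs⟩ := hd4
  -- from key and pascal: (q + r) * (2n+1) * (n+1) = s * (n+1) * (2n+1), so s = q + r
  have hqs : s = q + r := by
    have h2 : Nat.choose (3 * n + 1) (n + 1) = (2 * n + 1) * (q + r) := by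
      rw [pascal, hq, hr]; ring
    rw [h2, hs] at key
    have : (q + r) * ((n + 1) * (2 * n + 1)) = s * ((n + 1) * (2 * n + 1)) := by
      linarith [key]
    exact (Nat.eq_of_mul_eq_mul_right (by positivity) this).symm
  rw [hq, hr, hs, Nat.mul_div_cancel_left _ (by omega : 0 < 2 * n + 1),
    Nat.mul_div_cancel_left _ (by omega : 0 < 2 * n + 1),
    Nat.mul_div_cancel_left _ (by omega : 0 < n + 1)]
  omega
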